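/- arXiv:2410.06337 — 6 statements merged into one kernel-verified Lean document; each statement's English description precedes it below -/
import Mathlib

section
/- If a graph G has a monopolar partition, then G has a monopolar partition V = C ⊎ I in which I is an inclusion-maximal independent set of G. -/
open SimpleGraph

variable {V : Type*}

def IsIndepSet (G : SimpleGraph V) (I : Set V) : Prop :=
  ∀ ⦃u v : V⦄, u ∈ I → v ∈ I → ¬ G.Adj u v

def IsClusterSet (G : SimpleGraph V) (C : Set V) : Prop :=
  ∀ ⦃u v w : V⦄, u ∈ C → v ∈ C → w ∈ C → G.Adj u v → G.Adj v w → u ≠ w → G.Adj u w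

def IsMonopolarPartition (G : SimpleGraph V) (C I : Set V) : Prop :=
  Disjoint C I ∧ C ∪ I = Set.univ ∧ IsClusterSet G C ∧ _root_.IsIndepSet G I

def openNbhd (G : SimpleGraph V) (S : Set V) : Set V :=
  {v | v ∉ S ∧ ∃ u ∈ S, G.Adj u v}

def IsChair (G : SimpleGraph V) (a b c d e : V) : Prop :=
  a ≠ b ∧ a ≠ c ∧ a ≠ d ∧ a ≠ e ∧ b ≠ c ∧ b ≠ d ∧ b ≠ e ∧ c ≠ d ∧ c ≠ e ∧ d ≠ e ∧
  G.Adj a b ∧ G.Adj b c ∧ G.Adj b d ∧ G.Adj d e ∧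
  ¬ G.Adj a c ∧ ¬ G.Adj a d ∧ ¬ G.Adj a e ∧ ¬ G.Adj c d ∧ ¬ G.Adj c e ∧ ¬ G.Adj b e

def ChairFreeAfter (G : SimpleGraph V) (X : Set V) : Prop :=
  ¬ ∃ a b c d e : V, a ∉ X ∧ b ∉ X ∧ c ∉ X ∧ d ∉ X ∧ e ∉ X ∧ IsChair G a b c d e

def IsClaw (G : SimpleGraph V) (u v w x : V) : Prop :=
  v ≠ w ∧ v ≠ x ∧ w ≠ x ∧
  G.Adj u v ∧ G.Adj u w ∧ G.Adj u x ∧ ¬ G.Adj v w ∧ ¬ G.Adj v x ∧ ¬ G.Adj w x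

def ClawFreeAfter (G : SimpleGraph V) (X : Set V) : Prop :=
  ¬ ∃ u v w x : V, u ∉ X ∧ v ∉ X ∧ w ∉ X ∧ x ∉ X ∧ IsClaw G u v w x

def IsInducedC4 (G : SimpleGraph V) (p q r s : V) : Prop :=
  p ≠ q ∧ p ≠ r ∧ p ≠ s ∧ q ≠ r ∧ q ≠ s ∧ r ≠ s ∧
  G.Adj p q ∧ G.Adj q r ∧ G.Adj r s ∧ G.Adj s p ∧ ¬ G.Adj p r ∧ ¬ G.Adj q s

def IsCBadP3 (G : SimpleGraph V) (C' : Set V) (u v w : V) : Prop :=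
  u ≠ w ∧ G.Adj u v ∧ G.Adj v w ∧ ¬ G.Adj u w ∧
  (∀ x : V, (x = u ∨ x = v ∨ x = w ∨ G.Adj u x ∨ G.Adj v x ∨ G.Adj w x) → x ∉ C') ∧
  (∀ p : V, (p = u ∨ p = v ∨ p = w) → ¬ ∃ x y : V, G.Adj p x ∧ G.Adj p y ∧ G.Adj x y) ∧
  (¬ ∃ x y : V, IsInducedC4 G u v x y) ∧ (¬ ∃ x y : V, IsInducedC4 G v w x y)

theorem stmt1 (G : SimpleGraph V) (h : ∃ C I : Set V, IsMonopolarPartition G C I) :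
    ∃ C I : Set V, IsMonopolarPartition G C I ∧
      ∀ x : V, x ∉ I → ¬ _root_.IsIndepSet G (insert x I) := by
  obtain ⟨C, I, hdisj, hunion, hclus, hind⟩ := h
  set C' : Set V := {x ∈ C | ∀ y ∈ I, ¬ G.Adj x y} with hC'
  set T : Set (Set V) := {S | S ⊆ C' ∧ _root_.IsIndepSet G S} with hT
  obtain ⟨S, hST, hSmax⟩ : ∃ m, Maximal (· ∈ T) m := by
    apply zorn_subset
    intro c hcT hchain
    refine ⟨⋃₀ c, ⟨?_, ?_⟩, fun s hs => Set.subset_sUnion_of_mem hs⟩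
    · intro x hx
      obtain ⟨s, hs, hxs⟩ := hx
      exact (hcT hs).1 hxs
    · intro u v hu hv hadj
      obtain ⟨s, hs, hus⟩ := hu
      obtain ⟨t, ht, hvt⟩ := hv
      rcases hchain.total hs ht with hst | hts
      · exact (hcT ht).2 (hst hus) hvt hadj
      · exact (hcT hs).2 hus (hts hvt) hadj
  have hSC' : S ⊆ C' := hST.1
  have hSind : _root_.IsIndepSet G S := hST.2
  refine ⟨C \ S, I ∪ S, ⟨?_, ?_, ?_, ?_⟩, ?_⟩
  · rw [Set.disjoint_union_right]
    exact ⟨hdisj.mono_left Set.diff_subset, Set.disjoint_sdiff_left⟩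
  · apply Set.eq_univ_of_univ_subset
    rw [← hunion]
    intro x hx
    rcases hx with hxC | hxI
    · by_cases hxS : x ∈ S
      · exact Or.inr (Or.inr hxS)
      · exact Or.inl ⟨hxC, hxS⟩
    · exact Or.inr (Or.inl hxI)
  · intro u v w hu hv hw h1 h2 h3
    exact hclus hu.1 hv.1 hw.1 h1 h2 h3
  · intro u v hu hv hadj
    rcases hu with huI | huS
    · rcases hv with hvI | hvS
      · exact hind huI hvI hadj
      · exact (hSC' hvS).2 u huI hadj.symm
    · rcases hv with hvI | hvS
      · exact (hSC' huS).2 v hvI hadj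
      · exact hSind huS hvS hadj
  · intro x hx hcon
    have hxI : x ∉ I := fun h => hx (Or.inl h)
    have hxS : x ∉ S := fun h => hx (Or.inr h)
    have hxC : x ∈ C := by
      have hxu : x ∈ C ∪ I := hunion ▸ Set.mem_univ x
      rcases hxu with h1 | h1
      · exact h1
      · exact absurd h1 hxI
    have hxC' : x ∈ C' := by
      refine ⟨hxC, fun y hy hadj => ?_⟩
      exact hcon (Set.mem_insert x _) (Set.mem_insert_of_mem _ (Or.inl hy)) hadj
    have hmem : insert x S ∈ T := by
      constructor
      · exact Set.insert_subset hxC' hSC'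
      · intro u v hu hv hadj
        rcases hu with rfl | huS
        · rcases hv with rfl | hvS
          · exact G.loopless.irrefl _ hadj
          · exact hcon (Set.mem_insert _ _)
              (Set.mem_insert_of_mem _ (Or.inr hvS)) hadj
        · rcases hv with rfl | hvS
          · exact hcon (Set.mem_insert _ _)
              (Set.mem_insert_of_mem _ (Or.inr huS)) hadj.symm
          · exact hSind huS hvS hadj
    have := hSmax hmem (Set.subset_insert x S)
    exact hxS (this (Set.mem_insert x S))
end

section
/- Let G = (V,E) be a graph, C', I' disjoint vertex subsets, and x ∉ C' ∪ I' a vertex of degree exactly 1 in G. Then G has a monopolar partition extending (C', I') if and only if G − x has a monopolar partition extending (C', I'). -/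
open SimpleGraph

variable {V : Type*}

theorem stmt6 [Fintype V] (G : SimpleGraph V) [DecidableRel G.Adj]
    (C' I' : Set V) (hdisj : Disjoint C' I') (x : V) (hx : x ∉ C' ∪ I')
    (hdeg : G.degree x = 1) :
    (∃ C I : Set V, IsMonopolarPartition G C I ∧ C' ⊆ C ∧ I' ⊆ I) ↔
    (∃ C I : Set V, Disjoint C I ∧ C ∪ I = {x}ᶜ ∧
      IsClusterSet G C ∧ _root_.IsIndepSet G I ∧ C' ⊆ C ∧ I' ⊆ I) := by
  constructor
  · rintro ⟨C, I, ⟨hCI, huniv, hC, hI⟩, hC', hI'⟩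
    refine ⟨C \ {x}, I \ {x}, hCI.mono Set.diff_subset Set.diff_subset, ?_, ?_, ?_, ?_, ?_⟩
    · ext v
      simp only [Set.mem_union, Set.mem_diff, Set.mem_singleton_iff, Set.mem_compl_iff]
      constructor
      · rintro (⟨_, h⟩ | ⟨_, h⟩) <;> exact h
      · intro hv
        rcases (huniv ▸ Set.mem_univ v : v ∈ C ∪ I) with h | h
        · exact Or.inl ⟨h, hv⟩
        · exact Or.inr ⟨h, hv⟩
    · intro u v w hu hv hw; exact hC hu.1 hv.1 hw.1
    · intro u v hu hv; exact hI hu.1 hv.1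
    · intro v hv; exact ⟨hC' hv, fun h => hx (Or.inl (h ▸ hv))⟩
    · intro v hv; exact ⟨hI' hv, fun h => hx (Or.inr (h ▸ hv))⟩
  · rintro ⟨C, I, hCI, hcompl, hC, hI, hC', hI'⟩
    obtain ⟨y, hy⟩ := Finset.card_eq_one.mp hdeg
    have hadj : ∀ v, G.Adj x v ↔ v = y := by
      intro v
      rw [← SimpleGraph.mem_neighborFinset, hy, Finset.mem_singleton]
    have hyx : y ≠ x := fun h => G.irrefl (h ▸ (hadj y).mpr rfl)
    have hxC : x ∉ C := fun h => (show x ∈ ({x}ᶜ : Set V) from hcompl ▸ Or.inl h) rfl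
    have hxI : x ∉ I := fun h => (show x ∈ ({x}ᶜ : Set V) from hcompl ▸ Or.inr h) rfl
    have huniv : ∀ v : V, v = x ∨ v ∈ C ∨ v ∈ I := by
      intro v
      by_cases hvx : v = x
      · exact Or.inl hvx
      · exact Or.inr (by rw [← Set.mem_union, hcompl]; exact hvx)
    have hyCI : y ∈ C ∪ I := by rw [hcompl]; exact hyx
    rcases hyCI with hyC | hyI
    · -- y ∈ C : put x into I
      refine ⟨C, I ∪ {x}, ⟨?_, ?_, hC, ?_⟩, hC', fun v hv => Or.inl (hI' hv)⟩
      · exact Set.disjoint_union_right.mpr ⟨hCI, Set.disjoint_singleton_right.mpr hxC⟩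
      · ext v
        simp only [Set.mem_union, Set.mem_singleton_iff, Set.mem_univ, iff_true]
        rcases huniv v with h | h | h
        · exact Or.inr (Or.inr h)
        · exact Or.inl h
        · exact Or.inr (Or.inl h)
      · rintro u v (hu | hu) (hv | hv) huv
        · exact hI hu hv huv
        · have : u = y := (hadj u).mp (hv ▸ huv).symm
          exact hCI.ne_of_mem hyC (this ▸ hu) rfl
        · have : v = y := (hadj v).mp (hu ▸ huv)
          exact hCI.ne_of_mem hyC (this ▸ hv) rfl
        · exact G.irrefl (hu ▸ hv ▸ huv)
    · -- y ∈ I : put x into C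
      refine ⟨C ∪ {x}, I, ⟨?_, ?_, ?_, hI⟩, fun v hv => Or.inl (hC' hv), hI'⟩
      · exact Set.disjoint_union_left.mpr ⟨hCI, Set.disjoint_singleton_left.mpr hxI⟩
      · ext v
        simp only [Set.mem_union, Set.mem_singleton_iff, Set.mem_univ, iff_true]
        rcases huniv v with h | h | h
        · exact Or.inl (Or.inr h)
        · exact Or.inl (Or.inl h)
        · exact Or.inr h
      · have hnoadjC : ∀ v ∈ C, ¬ G.Adj x v := by
          intro v hv hadj'
          have : v = y := (hadj v).mp hadj'
          exact hCI.ne_of_mem hv (this ▸ hyI) rfl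
        rintro u v w (hu | rfl) (hv | rfl) (hw | rfl) huv hvw hne
        · exact hC hu hv hw huv hvw hne
        · exact (hnoadjC v hv hvw.symm).elim
        · exact (hnoadjC u hu huv.symm).elim
        · exact (G.irrefl hvw).elim
        · exact (hnoadjC v hv huv).elim
        · exact (hne rfl).elim
        · exact (G.irrefl huv).elim
        · exact (hne rfl).elim
end

section
/- A graph G = (V,E) has a monopolar partition extending (C', I') if and only if I' is an independent set in G and the induced subgraph G − I' has a monopolar partition extending (C' ∪ N(I'), ∅), where N(I') is the open neighbourhood of I' in G. -/
open SimpleGraph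

variable {V : Type*}

theorem stmt7 (G : SimpleGraph V) (C' I' : Set V) (hdisj : Disjoint C' I') :
    (∃ C I : Set V, IsMonopolarPartition G C I ∧ C' ⊆ C ∧ I' ⊆ I) ↔
    (_root_.IsIndepSet G I' ∧ ∃ C I : Set V, Disjoint C I ∧ C ∪ I = I'ᶜ ∧
      IsClusterSet G C ∧ _root_.IsIndepSet G I ∧ C' ∪ openNbhd G I' ⊆ C) := by
  constructor
  · rintro ⟨C, I, ⟨hCI, huniv, hclus, hind⟩, hC', hI'⟩
    have hIsub : ∀ v, v ∉ I → v ∈ C := by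
      intro v hv
      have := Set.ext_iff.mp huniv v
      simp at this; tauto
    refine ⟨fun u v hu hv => hind (hI' hu) (hI' hv), C, I \ I', hCI.mono_right Set.diff_subset, ?_, hclus, fun u v hu hv => hind hu.1 hv.1, ?_⟩
    · ext v
      simp only [Set.mem_union, Set.mem_diff, Set.mem_compl_iff]
      constructor
      · rintro (hv | ⟨_, hv⟩)
        · exact fun h => hCI.ne_of_mem hv (hI' h) rfl
        · exact hv
      · intro hv
        by_cases hvI : v ∈ I
        · exact Or.inr ⟨hvI, hv⟩
        · exact Or.inl (hIsub v hvI)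
    · rintro v (hv | ⟨hvI', u, hu, hadj⟩)
      · exact hC' hv
      · by_cases hvI : v ∈ I
        · exact absurd (hind (hI' hu) hvI) (fun h => h hadj)
        · exact hIsub v hvI
  · rintro ⟨hI'ind, C, I, hCI, hcompl, hclus, hind, hsub⟩
    have hCc : C ⊆ I'ᶜ := hcompl ▸ Set.subset_union_left
    have hIc : I ⊆ I'ᶜ := hcompl ▸ Set.subset_union_right
    refine ⟨C, I ∪ I', ⟨?_, ?_, hclus, ?_⟩, fun v hv => hsub (Or.inl hv), Set.subset_union_right⟩
    · refine Set.disjoint_union_right.mpr ⟨hCI, Set.disjoint_left.mpr fun v hv => hCc hv⟩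
    · rw [← Set.union_assoc, hcompl, Set.compl_union_self]
    · rintro u v (hu | hu) (hv | hv) hadj
      · exact hind hu hv hadj
      · exact absurd (hsub (Or.inr ⟨hIc hu, v, hv, hadj.symm⟩)) (hCI.ne_of_mem · hu rfl)
      · exact absurd (hsub (Or.inr ⟨hIc hv, u, hu, hadj⟩)) (hCI.ne_of_mem · hv rfl)
      · exact hI'ind hu hv hadj
end

section
/- Let G = (V,E) be a graph in which every vertex not in C' ⊆ V has degree at least 2, and suppose C' is a vertex modulator of G to chair-free graphs. If u,v,w is a C'-bad induced P3 in G (with middle vertex v), then v has degree exactly 2 in G. -/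
open SimpleGraph

variable {V : Type*}

theorem stmt10 [Fintype V] (G : SimpleGraph V) [DecidableRel G.Adj] (C' : Set V)
    (hdeg : ∀ v : V, v ∉ C' → 2 ≤ G.degree v)
    (hmod : ChairFreeAfter G C') (u v w : V) (hbad : IsCBadP3 G C' u v w) :
    G.degree v = 2 := by
  classical
  obtain ⟨huw, hAuv, hAvw, hnAuw, hC, htri, hc4uv, hc4vw⟩ := hbad
  have hset : G.neighborFinset v = {u, w} := by
    apply Finset.Subset.antisymm
    · intro z hz
      rw [SimpleGraph.mem_neighborFinset] at hz
      simp only [Finset.mem_insert, Finset.mem_singleton]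
      by_contra hzc
      push_neg at hzc
      obtain ⟨hzu, hzw⟩ := hzc
      have hnAzu : ¬ G.Adj z u := fun h => htri v (Or.inr (Or.inl rfl)) ⟨z, u, hz, hAuv.symm, h⟩
      have hnAzw : ¬ G.Adj z w := fun h => htri v (Or.inr (Or.inl rfl)) ⟨z, w, hz, hAvw, h⟩
      have huC : u ∉ C' := hC u (Or.inl rfl)
      have hcard : 1 < (G.neighborFinset u).card := hdeg u huC
      obtain ⟨s, hsmem, hsv⟩ := Finset.exists_mem_ne hcard v
      rw [SimpleGraph.mem_neighborFinset] at hsmem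
      have hAus : G.Adj u s := hsmem
      have hnAvs : ¬ G.Adj v s := fun h => htri u (Or.inl rfl) ⟨v, s, hAuv, hAus, h⟩
      have hsw : s ≠ w := fun h => hnAuw (h ▸ hAus)
      have hsz : s ≠ z := fun h => hnAzu ((h ▸ hAus).symm)
      have hnAws : ¬ G.Adj w s := fun h =>
        hc4uv ⟨w, s, hAuv.ne, huw, hAus.ne, hAvw.ne, Ne.symm hsv, Ne.symm hsw,
          hAuv, hAvw, h, hAus.symm, hnAuw, hnAvs⟩
      have hnAzs : ¬ G.Adj z s := fun h =>
        hc4uv ⟨z, s, hAuv.ne, Ne.symm hzu, hAus.ne, hz.ne, Ne.symm hsv, Ne.symm hsz,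
          hAuv, hz, h, hAus.symm, fun h' => hnAzu h'.symm, hnAvs⟩
      exact hmod ⟨w, v, z, u, s,
        hC w (Or.inr (Or.inr (Or.inl rfl))),
        hC v (Or.inr (Or.inl rfl)),
        hC z (Or.inr (Or.inr (Or.inr (Or.inr (Or.inl hz))))),
        huC,
        hC s (Or.inr (Or.inr (Or.inr (Or.inl hAus)))),
        hAvw.ne', Ne.symm hzw, Ne.symm huw, Ne.symm hsw,
        hz.ne, hAuv.ne', Ne.symm hsv, hzu, Ne.symm hsz, hAus.ne,
        hAvw.symm, hz, hAuv.symm, hAus,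
        fun h => hnAzw h.symm, fun h => hnAuw h.symm, hnAws, hnAzu, hnAzs, hnAvs⟩
    · intro z hz
      rw [SimpleGraph.mem_neighborFinset]
      rcases Finset.mem_insert.mp hz with h | h
      · exact h ▸ hAuv.symm
      · exact (Finset.mem_singleton.mp h) ▸ hAvw
  rw [SimpleGraph.degree, hset, Finset.card_insert_of_notMem (by simp [huw]),
    Finset.card_singleton]
end

section
/- Let G = (V,E) be a graph in which every vertex not in C' has degree at least 2, with C' a vertex modulator of G to chair-free graphs, and let u,v,w be a C'-bad induced P3 (middle vertex v). Then |N(u) \ {v}| = 1 and |N(w) \ {v}| = 1; in particular both end-vertices u and w have degree exactly 2 in G. -/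
open SimpleGraph

variable {V : Type*}

lemma side_aux {V : Type*} [Fintype V] [DecidableEq V] (G : SimpleGraph V) [DecidableRel G.Adj] (C' : Set V)
    (hdeg : ∀ v : V, v ∉ C' → 2 ≤ G.degree v)
    (hmod : ChairFreeAfter G C') (u v w : V)
    (huw : u ≠ w) (huv : G.Adj u v) (hvw : G.Adj v w) (hnuw : ¬ G.Adj u w)
    (hC' : ∀ x : V, (x = u ∨ x = v ∨ x = w ∨ G.Adj u x ∨ G.Adj v x ∨ G.Adj w x) → x ∉ C')
    (htriu : ¬ ∃ x y : V, G.Adj u x ∧ G.Adj u y ∧ G.Adj x y)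
    (hC4 : ∀ x : V, x ≠ v → G.Adj u x → G.Adj w x → False) :
    (G.neighborSet u \ {v}).ncard = 1 ∧ G.degree u = 2 := by
  have hvmem : v ∈ G.neighborFinset u := by rwa [SimpleGraph.mem_neighborFinset]
  have hu' : u ∉ C' := hC' u (Or.inl rfl)
  have hdu := hdeg u hu'
  have h1 := Finset.card_erase_add_one hvmem
  have hcard : 0 < ((G.neighborFinset u).erase v).card := by
    unfold SimpleGraph.degree at hdu; omega
  obtain ⟨x, hx⟩ := Finset.card_pos.mp hcard
  have hxv : x ≠ v := Finset.ne_of_mem_erase hx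
  have hux : G.Adj u x := by
    have := Finset.mem_of_mem_erase hx
    rwa [SimpleGraph.mem_neighborFinset] at this
  have key : ∀ z, z ≠ v → G.Adj u z → ¬ G.Adj z v ∧ ¬ G.Adj z w ∧ z ≠ w := by
    intro z hzv huz
    refine ⟨fun h => htriu ⟨z, v, huz, huv, h⟩, fun h => hC4 z hzv huz h.symm, ?_⟩
    rintro rfl; exact hnuw huz
  have heq : (G.neighborFinset u).erase v = {x} := by
    apply Finset.eq_singleton_iff_unique_mem.mpr
    refine ⟨hx, fun y hy => ?_⟩
    by_contra hyx
    have hyv : y ≠ v := Finset.ne_of_mem_erase hy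
    have huy : G.Adj u y := by
      have := Finset.mem_of_mem_erase hy
      rwa [SimpleGraph.mem_neighborFinset] at this
    obtain ⟨hxnv, hxnw, hxw⟩ := key x hxv hux
    obtain ⟨hynv, hynw, hyw⟩ := key y hyv huy
    have hxy : ¬ G.Adj x y := fun h => htriu ⟨x, y, hux, huy, h⟩
    exact hmod ⟨y, u, x, v, w,
      hC' y (Or.inr (Or.inr (Or.inr (Or.inl huy)))), hu',
      hC' x (Or.inr (Or.inr (Or.inr (Or.inl hux)))),
      hC' v (Or.inr (Or.inl rfl)), hC' w (Or.inr (Or.inr (Or.inl rfl))),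
      huy.ne', hyx, hyv, hyw, hux.ne, huv.ne, huw, hxv, hxw, hvw.ne,
      huy.symm, hux, huv, hvw,
      fun h => hxy h.symm, hynv, hynw, hxnv, hxnw, hnuw⟩
  constructor
  · have hset : (G.neighborSet u \ {v}) = ↑((G.neighborFinset u).erase v) := by
      rw [Finset.coe_erase, SimpleGraph.neighborFinset_def, Set.coe_toFinset]
    rw [hset, Set.ncard_coe_finset, heq, Finset.card_singleton]
  · rw [heq, Finset.card_singleton] at h1
    unfold SimpleGraph.degree
    omega

theorem stmt12 [Fintype V] (G : SimpleGraph V) [DecidableRel G.Adj] (C' : Set V)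
    (hdeg : ∀ v : V, v ∉ C' → 2 ≤ G.degree v)
    (hmod : ChairFreeAfter G C') (u v w : V) (hbad : IsCBadP3 G C' u v w) :
    (G.neighborSet u \ {v}).ncard = 1 ∧ (G.neighborSet w \ {v}).ncard = 1 ∧
    G.degree u = 2 ∧ G.degree w = 2 := by
  classical
  obtain ⟨huw, huv, hvw, hnuw, hC', htri, hC4uv, hC4vw⟩ := hbad
  have htriu := htri u (Or.inl rfl)
  have htriw := htri w (Or.inr (Or.inr rfl))
  have hC4u : ∀ x : V, x ≠ v → G.Adj u x → G.Adj w x → False := by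
    intro x hxv hux hwx
    have hxnv : ¬ G.Adj x v := fun h => htriu ⟨x, v, hux, huv, h⟩
    exact hC4uv ⟨w, x, huv.ne, huw, hux.ne, hvw.ne, fun h => hxv h.symm, hwx.ne,
      huv, hvw, hwx, hux.symm, hnuw, fun h => hxnv h.symm⟩
  have hC4w : ∀ x : V, x ≠ v → G.Adj w x → G.Adj u x → False := by
    intro x hxv hwx hux
    have hxnv : ¬ G.Adj x v := fun h => htriw ⟨x, v, hwx, hvw.symm, h⟩
    exact hC4vw ⟨x, u, hvw.ne, fun h => hxv h.symm, huv.ne.symm, hwx.ne,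
      fun h => huw h.symm, hux.ne.symm,
      hvw, hwx, hux.symm, huv, fun h => hxnv h.symm, fun h => hnuw h.symm⟩
  have h1 := side_aux G C' hdeg hmod u v w huw huv hvw hnuw hC' htriu hC4u
  have h2 := side_aux G C' hdeg hmod w v u (Ne.symm huw) hvw.symm huv.symm
    (fun h => hnuw h.symm) (fun x hx => hC' x (by tauto)) htriw hC4w
  exact ⟨h1.1, h2.1, h1.2, h2.2⟩
end

section
/- Let G = (V,E) be a graph in which every vertex not in C' has degree at least 2, with C' a vertex modulator of G to chair-free graphs, and let u,v,w be a C'-bad induced P3 with middle vertex v. Then G has a monopolar partition extending (C', ∅) if and only if G − v has a monopolar partition extending (C', ∅). -/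
open SimpleGraph

variable {V : Type*}

lemma exists_nbr_ne [Fintype V] (G : SimpleGraph V) [DecidableRel G.Adj]
    (y b : V) (h : 2 ≤ G.degree y) : ∃ f, G.Adj y f ∧ f ≠ b := by
  have h1 : 1 < (G.neighborFinset y).card := h
  obtain ⟨a, ha, c, hc, hac⟩ := Finset.one_lt_card.1 h1
  rw [SimpleGraph.mem_neighborFinset] at ha hc
  by_cases hab : a = b
  · exact ⟨c, hc, fun hcb => hac (hab.trans hcb.symm)⟩
  · exact ⟨a, ha, hab⟩

lemma cluster_insert (G : SimpleGraph V) {C : Set V} {v : V} (hclus : IsClusterSet G C)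
    (h1 : ∀ y z, y ∈ C → z ∈ C → G.Adj v y → G.Adj v z → y = z)
    (h2 : ∀ y z, y ∈ C → z ∈ C → G.Adj v y → G.Adj y z → G.Adj v z) :
    IsClusterSet G (insert v C) := by
  intro a b c ha hb hc hab hbc hac
  rcases Set.mem_insert_iff.1 ha with rfl | haC
  · rcases Set.mem_insert_iff.1 hb with rfl | hbC
    · exact absurd hab (G.irrefl)
    · rcases Set.mem_insert_iff.1 hc with rfl | hcC
      · exact absurd rfl hac
      · exact h2 b c hbC hcC hab hbc
  · rcases Set.mem_insert_iff.1 hb with rfl | hbC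
    · rcases Set.mem_insert_iff.1 hc with rfl | hcC
      · exact absurd hbc (G.irrefl)
      · exact absurd (h1 a c haC hcC hab.symm hbc) hac
    · rcases Set.mem_insert_iff.1 hc with rfl | hcC
      · exact (h2 b a hbC haC hbc.symm hab.symm).symm
      · exact hclus haC hbC hcC hab hbc hac

lemma keyL [Fintype V] (G : SimpleGraph V) [DecidableRel G.Adj]
    (C' C I : Set V) (v b o : V)
    (hdeg : ∀ x : V, x ∉ C' → 2 ≤ G.degree x)
    (hmod : ChairFreeAfter G C')
    (hC'C : C' ⊆ C)
    (hdisj : Disjoint C I)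
    (hunion : C ∪ I = {v}ᶜ)
    (hclus : IsClusterSet G C) (hind : _root_.IsIndepSet G I)
    (hvb : G.Adj v b)
    (hNv : ∀ z, G.Adj v z → z = b ∨ z = o)
    (hbo : ¬ G.Adj b o)
    (ho : ∀ e, G.Adj b e → e ≠ v → ¬ G.Adj o e)
    (hvC' : v ∉ C') (hbC' : b ∉ C')
    (hnbC' : ∀ e, G.Adj b e → e ∉ C')
    (htri : ¬ ∃ x y, G.Adj b x ∧ G.Adj b y ∧ G.Adj x y)
    (hbC : b ∈ C) (c y : V) (hcC : c ∈ C) (hbc : G.Adj b c)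
    (hyI : y ∈ I) (hby : G.Adj b y) : False := by
  have hne : ∀ x, x ∈ C ∪ I ↔ x ≠ v := fun x => by rw [hunion]; simp
  have hcv : c ≠ v := (hne c).1 (Or.inl hcC)
  have hyv : y ≠ v := (hne y).1 (Or.inr hyI)
  have hcy : ¬ G.Adj c y := fun h => htri ⟨c, y, hbc, hby, h⟩
  have hcC' : c ∉ C' := hnbC' c hbc
  have hyC' : y ∉ C' := hnbC' y hby
  have hvc : ¬ G.Adj v c := by
    intro h
    rcases hNv c h with rfl | rfl
    · exact G.irrefl hbc
    · exact hbo hbc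
  have hvy : ¬ G.Adj v y := by
    intro h
    rcases hNv y h with rfl | rfl
    · exact G.irrefl hby
    · exact hbo hby
  have hoc : ¬ G.Adj o c := ho c hbc hcv
  have hoy : ¬ G.Adj o y := ho y hby hyv
  have hcI : c ∉ I := Set.disjoint_left.mp hdisj hcC
  have hcyne : c ≠ y := fun h => hcI (h ▸ hyI)
  have step1 : ∀ f, G.Adj y f → f ≠ b → f ∈ C' := by
    intro f hyf hfb
    by_contra hfC'
    have hfv : f ≠ v := by
      rintro rfl
      exact hvy hyf.symm
    have hvf : ¬ G.Adj v f := by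
      intro h
      rcases hNv f h with rfl | rfl
      · exact hfb rfl
      · exact hoy hyf.symm
    have hbf : ¬ G.Adj b f := fun h => htri ⟨y, f, hby, h, hyf⟩
    have hfI : f ∉ I := fun h => hind hyI h hyf
    have hfC : f ∈ C := by
      rcases (hne f).2 hfv with h | h
      · exact h
      · exact absurd h hfI
    have hcf : ¬ G.Adj c f := by
      intro h
      exact hbf (hclus hbC hcC hfC hbc h hfb.symm)
    exact hmod ⟨v, b, c, y, f, hvC', hbC', hcC', hyC', hfC',
      hvb.ne, hcv.symm, hyv.symm, hfv.symm,
      hbc.ne, hby.ne, hfb.symm,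
      hcyne, (fun h => hcy (by rw [h]; exact hyf.symm)), hyf.ne,
      hvb, hbc, hby, hyf,
      hvc, hvy, hvf, hcy, hcf, hbf⟩
  have step2 : ∀ g, G.Adj c g → g ≠ b → g ∈ C' := by
    intro g hcg hgb
    by_contra hgC'
    have hyg : ¬ G.Adj y g := fun h => hgC' (step1 g h hgb)
    have hgv : g ≠ v := by
      rintro rfl
      exact hvc hcg.symm
    have hvg : ¬ G.Adj v g := by
      intro h
      rcases hNv g h with rfl | rfl
      · exact hgb rfl
      · exact hoc hcg.symm
    have hbg : ¬ G.Adj b g := fun h => htri ⟨c, g, hbc, h, hcg⟩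
    exact hmod ⟨v, b, y, c, g, hvC', hbC', hyC', hcC', hgC',
      hvb.ne, hyv.symm, hcv.symm, hgv.symm,
      hby.ne, hbc.ne, hgb.symm,
      hcyne.symm, (fun h => hcy (by rw [h]; exact hcg)), hcg.ne,
      hvb, hby, hbc, hcg,
      hvy, hvc, hvg, (fun h => hcy h.symm), hyg, hbg⟩
  obtain ⟨g, hcg, hgb⟩ := exists_nbr_ne G c b (hdeg c hcC')
  have hgC' : g ∈ C' := step2 g hcg hgb
  have hbgne : b ≠ g := fun h => hbC' (h ▸ hgC')
  have hadj : G.Adj b g := hclus hbC hcC (hC'C hgC') hbc hcg hbgne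
  exact hnbC' g hadj hgC'

theorem stmt13 [Fintype V] (G : SimpleGraph V) [DecidableRel G.Adj] (C' : Set V)
    (hdeg : ∀ x : V, x ∉ C' → 2 ≤ G.degree x)
    (hmod : ChairFreeAfter G C') (u v w : V) (hbad : IsCBadP3 G C' u v w) :
    (∃ C I : Set V, IsMonopolarPartition G C I ∧ C' ⊆ C) ↔
    (∃ C I : Set V, Disjoint C I ∧ C ∪ I = {v}ᶜ ∧
      IsClusterSet G C ∧ _root_.IsIndepSet G I ∧ C' ⊆ C) := by
  obtain ⟨huw, huv, hvw, hnuw, hav, htri, hC4uv, hC4vw⟩ := hbad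
  have huC' : u ∉ C' := hav u (Or.inl rfl)
  have hvC' : v ∉ C' := hav v (Or.inr (Or.inl rfl))
  have hwC' : w ∉ C' := hav w (Or.inr (Or.inr (Or.inl rfl)))
  have hnbuC' : ∀ e, G.Adj u e → e ∉ C' :=
    fun e h => hav e (Or.inr (Or.inr (Or.inr (Or.inl h))))
  have hnbvC' : ∀ e, G.Adj v e → e ∉ C' :=
    fun e h => hav e (Or.inr (Or.inr (Or.inr (Or.inr (Or.inl h)))))
  have hnbwC' : ∀ e, G.Adj w e → e ∉ C' :=
    fun e h => hav e (Or.inr (Or.inr (Or.inr (Or.inr (Or.inr h)))))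
  have htriu := htri u (Or.inl rfl)
  have htriv := htri v (Or.inr (Or.inl rfl))
  have htriw := htri w (Or.inr (Or.inr rfl))
  have hNuw : ∀ e, e ≠ v → G.Adj u e → ¬ G.Adj w e := by
    intro e hev hue hwe
    have hve : ¬ G.Adj v e := fun h => htriu ⟨v, e, huv, hue, h⟩
    exact hC4uv ⟨w, e, huv.ne, huw, hue.ne, hvw.ne, hev.symm, hwe.ne,
      huv, hvw, hwe, hue.symm, hnuw, hve⟩
  have claimA : ∀ x, G.Adj v x → x ≠ u → x ≠ w → ∀ e, G.Adj x e → e ≠ v → e ∈ C' := by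
    intro x hvx hxu hxw e hxe hev
    by_contra heC'
    have hux : ¬ G.Adj u x := fun hh => htriv ⟨u, x, huv.symm, hvx, hh⟩
    have hwx : ¬ G.Adj w x := fun hh => htriv ⟨w, x, hvw, hvx, hh⟩
    have hve : ¬ G.Adj v e := fun hh => htriv ⟨x, e, hvx, hh, hxe⟩
    have hue : ¬ G.Adj u e := by
      intro h
      exact hC4uv ⟨x, e, huv.ne, hxu.symm, h.ne, hvx.ne, hev.symm, hxe.ne,
        huv, hvx, hxe, h.symm, hux, hve⟩
    have hwe : ¬ G.Adj w e := by
      intro h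
      exact hC4vw ⟨e, x, hvw.ne, hev.symm, hvx.ne, h.ne, hxw.symm, hxe.ne',
        hvw, h, hxe.symm, hvx.symm, hve, hwx⟩
    exact hmod ⟨u, v, w, x, e, huC', hvC', hwC', hnbvC' x hvx, heC',
      huv.ne, huw, hxu.symm, (fun h => hux (by rw [h]; exact hxe.symm)),
      hvw.ne, hvx.ne, hev.symm, hxw.symm,
      (fun h => hwx (by rw [h]; exact hxe.symm)), hxe.ne,
      huv, hvw, hvx, hxe,
      hnuw, hux, hue, hwx, hwe, hve⟩
  have hNv : ∀ z, G.Adj v z → z = u ∨ z = w := by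
    by_contra h
    push_neg at h
    obtain ⟨x, hvx, hxu, hxw⟩ := h
    obtain ⟨e, hue, hev⟩ := exists_nbr_ne G u v (hdeg u huC')
    have heC' : e ∉ C' := hnbuC' e hue
    have hux : ¬ G.Adj u x := fun hh => htriv ⟨u, x, huv.symm, hvx, hh⟩
    have hwx : ¬ G.Adj w x := fun hh => htriv ⟨w, x, hvw, hvx, hh⟩
    have hxe : ¬ G.Adj x e := fun hh => heC' (claimA x hvx hxu hxw e hh hev)
    have hve : ¬ G.Adj v e := fun hh => htriu ⟨v, e, huv, hue, hh⟩
    have hwe : ¬ G.Adj w e := hNuw e hev hue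
    exact hmod ⟨w, v, x, u, e, hwC', hvC', hnbvC' x hvx, huC', heC',
      hvw.ne', hxw.symm, huw.symm, (fun h => hnuw (by rw [h]; exact hue)),
      hvx.ne, huv.ne', hev.symm, hxu,
      (fun h => hux (by rw [h]; exact hue)), hue.ne,
      hvw.symm, hvx, huv.symm, hue,
      hwx, (fun h => hnuw h.symm), hwe, (fun h => hux h.symm), hxe, hve⟩
  constructor
  · rintro ⟨C, I, ⟨hdisj, hunion, hclus, hind⟩, hC'C⟩
    refine ⟨C \ {v}, I \ {v}, Disjoint.mono Set.diff_subset Set.diff_subset hdisj,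
      ?_, fun a b c ha hb hc => hclus ha.1 hb.1 hc.1,
      fun a b ha hb => hind ha.1 hb.1,
      fun x hx => ⟨hC'C hx, fun h => hvC' (by rwa [Set.mem_singleton_iff.1 h] at hx)⟩⟩
    rw [← Set.union_diff_distrib, hunion, Set.compl_eq_univ_diff]
  · rintro ⟨C, I, hdisj, hunion, hclus, hind, hC'C⟩
    have hne : ∀ x, x ∈ C ∪ I ↔ x ≠ v := fun x => by rw [hunion]; simp
    have hvnC : v ∉ C := fun h => (hne v).1 (Or.inl h) rfl
    have hvnI : v ∉ I := fun h => (hne v).1 (Or.inr h) rfl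
    have hxor : ∀ x : V, x = v ∨ x ∈ C ∨ x ∈ I := by
      intro x
      by_cases h : x = v
      · exact Or.inl h
      · exact Or.inr ((hne x).2 h)
    have huCI : u ∈ C ∨ u ∈ I := (hne u).2 huv.ne
    have hwCI : w ∈ C ∨ w ∈ I := (hne w).2 hvw.ne'
    rcases huCI with huC | huI
    · rcases hwCI with hwC | hwI
      · -- both in C : put v in I
        refine ⟨C, insert v I, ⟨?_, ?_, hclus, ?_⟩, hC'C⟩
        · rw [Set.disjoint_left]
          intro x hxC hxvI
          rcases Set.mem_insert_iff.1 hxvI with rfl | hxI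
          · exact hvnC hxC
          · exact Set.disjoint_left.mp hdisj hxC hxI
        · ext x
          simp only [Set.mem_union, Set.mem_insert_iff, Set.mem_univ, iff_true]
          rcases hxor x with h | h | h <;> tauto
        · intro a b ha hb hab
          have key : ∀ z, z ∈ I → ¬ G.Adj v z := by
            intro z hzI hvz
            rcases hNv z hvz with rfl | rfl
            · exact Set.disjoint_left.mp hdisj huC hzI
            · exact Set.disjoint_left.mp hdisj hwC hzI
          rcases Set.mem_insert_iff.1 ha with rfl | haI
          · rcases Set.mem_insert_iff.1 hb with rfl | hbI
            · exact G.irrefl hab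
            · exact key b hbI hab
          · rcases Set.mem_insert_iff.1 hb with rfl | hbI
            · exact key a haI hab.symm
            · exact hind haI hbI hab
      · -- u ∈ C, w ∈ I
        by_cases huNC : ∃ c ∈ C, G.Adj u c
        · by_cases huNI : ∃ y ∈ I, G.Adj u y
          · obtain ⟨c, hcC, huc⟩ := huNC
            obtain ⟨y, hyI, huy⟩ := huNI
            exact absurd (keyL G C' C I v u w hdeg hmod hC'C hdisj hunion hclus hind
              huv.symm hNv hnuw (fun e he hev h => hNuw e hev he h)
              hvC' huC' hnbuC' htriu huC c y hcC huc hyI huy) not_false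
          · -- move u to I, put v in C
            push_neg at huNI
            have huw' : u ∉ C' := huC'
            refine ⟨insert v (C \ {u}), insert u I, ⟨?_, ?_, ?_, ?_⟩, ?_⟩
            · rw [Set.disjoint_left]
              intro x hx hx'
              rcases Set.mem_insert_iff.1 hx with rfl | hx
              · rcases Set.mem_insert_iff.1 hx' with h | h
                · exact huv.ne' h
                · exact hvnI h
              · rcases Set.mem_insert_iff.1 hx' with rfl | h
                · exact hx.2 rfl
                · exact Set.disjoint_left.mp hdisj hx.1 h
            · ext x
              simp only [Set.mem_union, Set.mem_insert_iff, Set.mem_diff,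
                Set.mem_singleton_iff, Set.mem_univ, iff_true]
              rcases hxor x with h | h | h
              · tauto
              · by_cases hxw : x = u <;> tauto
              · tauto
            · refine cluster_insert G (fun a b c ha hb hc => hclus ha.1 hb.1 hc.1) ?_ ?_
              · intro y z hy hz hvy hvz
                rcases hNv y hvy with rfl | rfl
                · exact absurd rfl hy.2
                · exact absurd hz.1 (fun h => by
                    rcases hNv z hvz with rfl | rfl
                    · exact hz.2 rfl
                    · exact Set.disjoint_left.mp hdisj h hwI)
              · intro y z hy hz hvy hyz
                rcases hNv y hvy with rfl | rfl
                · exact absurd rfl hy.2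
                · exact absurd hy.1 (fun h => Set.disjoint_left.mp hdisj h hwI)
            · intro a b ha hb hab
              rcases Set.mem_insert_iff.1 ha with rfl | haI
              · rcases Set.mem_insert_iff.1 hb with rfl | hbI
                · exact G.irrefl hab
                · exact huNI b hbI hab
              · rcases Set.mem_insert_iff.1 hb with rfl | hbI
                · exact huNI a haI hab.symm
                · exact hind haI hbI hab
            · intro x hx
              exact Set.mem_insert_iff.2 (Or.inr ⟨hC'C hx, fun h => huC' (h ▸ hx)⟩)
        · -- u has no C-neighbour : put v in C
          push_neg at huNC
          refine ⟨insert v C, I, ⟨?_, ?_, ?_, hind⟩, fun x hx => Set.mem_insert_iff.2 (Or.inr (hC'C hx))⟩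
          · rw [Set.disjoint_left]
            intro x hx hxI
            rcases Set.mem_insert_iff.1 hx with rfl | hxC
            · exact hvnI hxI
            · exact Set.disjoint_left.mp hdisj hxC hxI
          · ext x
            simp only [Set.mem_union, Set.mem_insert_iff, Set.mem_univ, iff_true]
            rcases hxor x with h | h | h <;> tauto
          · refine cluster_insert G hclus ?_ ?_
            · intro y z hy hz hvy hvz
              have hy' : y = u := by
                rcases hNv y hvy with rfl | rfl
                · rfl
                · exact absurd hy (fun h => Set.disjoint_left.mp hdisj h hwI)
              have hz' : z = u := by
                rcases hNv z hvz with rfl | rfl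
                · rfl
                · exact absurd hz (fun h => Set.disjoint_left.mp hdisj h hwI)
              rw [hy', hz']
            · intro y z hy hz hvy hyz
              have hy' : y = u := by
                rcases hNv y hvy with rfl | rfl
                · rfl
                · exact absurd hy (fun h => Set.disjoint_left.mp hdisj h hwI)
              subst hy'
              exact absurd hyz (by intro hh; exact huNC z hz hh)
    · rcases hwCI with hwC | hwI
      · -- u ∈ I, w ∈ C
        by_cases hwNC : ∃ c ∈ C, G.Adj w c
        · by_cases hwNI : ∃ y ∈ I, G.Adj w y
          · obtain ⟨c, hcC, hwc⟩ := hwNC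
            obtain ⟨y, hyI, hwy⟩ := hwNI
            exact absurd (keyL G C' C I v w u hdeg hmod hC'C hdisj hunion hclus hind
              hvw (fun z hz => (hNv z hz).symm) (fun h => hnuw h.symm)
              (fun e he hev h => hNuw e hev h he)
              hvC' hwC' hnbwC' htriw hwC c y hcC hwc hyI hwy) not_false
          · push_neg at hwNI
            refine ⟨insert v (C \ {w}), insert w I, ⟨?_, ?_, ?_, ?_⟩, ?_⟩
            · rw [Set.disjoint_left]
              intro x hx hx'
              rcases Set.mem_insert_iff.1 hx with rfl | hx
              · rcases Set.mem_insert_iff.1 hx' with h | h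
                · exact hvw.ne h
                · exact hvnI h
              · rcases Set.mem_insert_iff.1 hx' with rfl | h
                · exact hx.2 rfl
                · exact Set.disjoint_left.mp hdisj hx.1 h
            · ext x
              simp only [Set.mem_union, Set.mem_insert_iff, Set.mem_diff,
                Set.mem_singleton_iff, Set.mem_univ, iff_true]
              rcases hxor x with h | h | h
              · tauto
              · by_cases hxw : x = w <;> tauto
              · tauto
            · refine cluster_insert G (fun a b c ha hb hc => hclus ha.1 hb.1 hc.1) ?_ ?_
              · intro y z hy hz hvy hvz
                rcases hNv y hvy with rfl | rfl
                · exact absurd hy.1 (fun h => Set.disjoint_left.mp hdisj h huI)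
                · exact absurd rfl hy.2
              · intro y z hy hz hvy hyz
                rcases hNv y hvy with rfl | rfl
                · exact absurd hy.1 (fun h => Set.disjoint_left.mp hdisj h huI)
                · exact absurd rfl hy.2
            · intro a b ha hb hab
              rcases Set.mem_insert_iff.1 ha with rfl | haI
              · rcases Set.mem_insert_iff.1 hb with rfl | hbI
                · exact G.irrefl hab
                · exact hwNI b hbI hab
              · rcases Set.mem_insert_iff.1 hb with rfl | hbI
                · exact hwNI a haI hab.symm
                · exact hind haI hbI hab
            · intro x hx
              exact Set.mem_insert_iff.2 (Or.inr ⟨hC'C hx, fun h => hwC' (h ▸ hx)⟩)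
        · push_neg at hwNC
          refine ⟨insert v C, I, ⟨?_, ?_, ?_, hind⟩, fun x hx => Set.mem_insert_iff.2 (Or.inr (hC'C hx))⟩
          · rw [Set.disjoint_left]
            intro x hx hxI
            rcases Set.mem_insert_iff.1 hx with rfl | hxC
            · exact hvnI hxI
            · exact Set.disjoint_left.mp hdisj hxC hxI
          · ext x
            simp only [Set.mem_union, Set.mem_insert_iff, Set.mem_univ, iff_true]
            rcases hxor x with h | h | h <;> tauto
          · refine cluster_insert G hclus ?_ ?_
            · intro y z hy hz hvy hvz
              have hy' : y = w := by
                rcases hNv y hvy with rfl | rfl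
                · exact absurd hy (fun h => Set.disjoint_left.mp hdisj h huI)
                · rfl
              have hz' : z = w := by
                rcases hNv z hvz with rfl | rfl
                · exact absurd hz (fun h => Set.disjoint_left.mp hdisj h huI)
                · rfl
              rw [hy', hz']
            · intro y z hy hz hvy hyz
              have hy' : y = w := by
                rcases hNv y hvy with rfl | rfl
                · exact absurd hy (fun h => Set.disjoint_left.mp hdisj h huI)
                · rfl
              subst hy'
              exact absurd hyz (by intro hh; exact hwNC z hz hh)
      · -- both in I : put v in C
        refine ⟨insert v C, I, ⟨?_, ?_, ?_, hind⟩, fun x hx => Set.mem_insert_iff.2 (Or.inr (hC'C hx))⟩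
        · rw [Set.disjoint_left]
          intro x hx hxI
          rcases Set.mem_insert_iff.1 hx with rfl | hxC
          · exact hvnI hxI
          · exact Set.disjoint_left.mp hdisj hxC hxI
        · ext x
          simp only [Set.mem_union, Set.mem_insert_iff, Set.mem_univ, iff_true]
          rcases hxor x with h | h | h <;> tauto
        · refine cluster_insert G hclus ?_ ?_
          · intro y z hy hz hvy hvz
            rcases hNv y hvy with rfl | rfl
            · exact absurd hy (Set.disjoint_right.mp hdisj huI)
            · exact absurd hy (Set.disjoint_right.mp hdisj hwI)
          · intro y z hy hz hvy hyz
            rcases hNv y hvy with rfl | rfl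
            · exact absurd hy (Set.disjoint_right.mp hdisj huI)
            · exact absurd hy (Set.disjoint_right.mp hdisj hwI)
end
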